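/- arXiv:patt-sol/9801003 — 3 statements merged into one kernel-verified Lean document; each statement's English description precedes it below -/
import Mathlib

section
/- Uniqueness of the mixing profile: for fixed η₊, η₋ ∈ (−1/√3, 1/√3), if η̃₁ and η̃₂ are two twice continuously differentiable functions ℝ → (−1/√3, 1/√3) both satisfying (d²/dξ²)[A(η̃ⱼ(ξ))] + (ξ/2)·η̃ⱼ′(ξ) = 0 for all ξ ∈ ℝ together with the boundary conditions η̃ⱼ(ξ) → η₊ as ξ → +∞ and η̃ⱼ(ξ) → η₋ as ξ → −∞ (j = 1, 2), then η̃₁ = η̃₂. -/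
noncomputable section

open Real Filter MeasureTheory Set

/-- The coefficient `a(η) = (1 - 3η²)/(1 - η²)`. -/
def aGL (η : ℝ) : ℝ := (1 - 3 * η ^ 2) / (1 - η ^ 2)

/-- The primitive `A(η) = ∫₀^η a(s) ds`. -/
def AGL (η : ℝ) : ℝ := ∫ s in (0:ℝ)..η, aGL s

/-- A mixing profile for boundary values `ηp` (at `+∞`) and `ηm` (at `-∞`). -/
def IsMixingProfile (ηp ηm : ℝ) (e : ℝ → ℝ) : Prop :=
  ContDiff ℝ 2 e ∧
  (∀ ξ, e ξ ∈ Set.Ioo (-(1 / Real.sqrt 3)) (1 / Real.sqrt 3)) ∧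
  (∀ ξ, deriv (deriv (fun x => AGL (e x))) ξ + ξ / 2 * deriv e ξ = 0) ∧
  Filter.Tendsto e Filter.atTop (nhds ηp) ∧
  Filter.Tendsto e Filter.atBot (nhds ηm)

/-! ### Elementary facts about `aGL` and `AGL` -/

lemma sq_lt_third {x : ℝ} (hx : x ∈ Set.Ioo (-(1 / Real.sqrt 3)) (1 / Real.sqrt 3)) :
    x ^ 2 < 1 / 3 := by
  have : x ^ 2 < (1 / Real.sqrt 3) ^ 2 := sq_lt_sq' hx.1 hx.2
  calc x ^ 2 < (1 / Real.sqrt 3) ^ 2 := this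
    _ = 1 / 3 := by
      rw [div_pow, one_pow, Real.sq_sqrt (by norm_num : (3:ℝ) ≥ 0)]

lemma aGL_pos {x : ℝ} (hx : x ^ 2 < 1 / 3) : 0 < aGL x := by
  have h1 : 0 < 1 - 3 * x ^ 2 := by linarith
  have h2 : 0 < 1 - x ^ 2 := by nlinarith [sq_nonneg x]
  exact div_pos h1 h2

lemma aGL_le_one {x : ℝ} (hx : x ^ 2 < 1 / 3) : aGL x ≤ 1 := by
  have h2 : 0 < 1 - x ^ 2 := by nlinarith [sq_nonneg x]
  rw [aGL, div_le_one h2]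
  nlinarith [sq_nonneg x]

lemma continuousAt_aGL {x : ℝ} (hx : x ^ 2 < 1) : ContinuousAt aGL x := by
  apply ContinuousAt.div (by fun_prop) (by fun_prop)
  intro h; nlinarith

lemma differentiableAt_aGL {x : ℝ} (hx : x ^ 2 < 1) : DifferentiableAt ℝ aGL x := by
  apply DifferentiableAt.div (by fun_prop) (by fun_prop)
  intro h; nlinarith

lemma continuousOn_aGL : ContinuousOn aGL (Set.Ioo (-1 : ℝ) 1) := by
  intro x hx
  exact (continuousAt_aGL (by obtain ⟨h1, h2⟩ := hx; nlinarith)).continuousWithinAt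

lemma hasDerivAt_AGL {x : ℝ} (hx : x ^ 2 < 1) : HasDerivAt AGL (aGL x) x := by
  have hx1 : x ∈ Set.Ioo (-1:ℝ) 1 := by constructor <;> nlinarith
  have hsub : Set.uIcc (0:ℝ) x ⊆ Set.Ioo (-1:ℝ) 1 := by
    intro s hs
    rw [Set.mem_uIcc] at hs
    constructor <;> rcases hs with ⟨h1, h2⟩ | ⟨h1, h2⟩ <;> rcases hx1 with ⟨ha, hb⟩ <;> nlinarith
  apply intervalIntegral.integral_hasDerivAt_right
  · exact (continuousOn_aGL.mono hsub).intervalIntegrable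
  · exact continuousOn_aGL.stronglyMeasurableAtFilter isOpen_Ioo x hx1
  · exact continuousAt_aGL hx

lemma aGL_even (x : ℝ) : aGL (-x) = aGL x := by simp [aGL]

lemma AGL_neg (y : ℝ) : AGL (-y) = -AGL y := by
  have h1 : (∫ x in (0:ℝ)..y, aGL (-x)) = ∫ x in (-y)..(0:ℝ), aGL x := by
    simpa using intervalIntegral.integral_comp_neg (a := (0:ℝ)) (b := y) (f := aGL)
  have h2 : (∫ x in (0:ℝ)..y, aGL (-x)) = AGL y := by
    simp [aGL_even, AGL]
  rw [AGL, intervalIntegral.integral_symm, ← h1, h2]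

/-! ### The flux `v` and the integrating factor -/

/-- The "flux" `v = a(e) e'`, i.e. the derivative of `A ∘ e`. -/
def vGL (e : ℝ → ℝ) : ℝ → ℝ := fun ξ => aGL (e ξ) * deriv e ξ

/-- The exponent in the integrating factor. -/
def IGL (e : ℝ → ℝ) : ℝ → ℝ := fun ξ => ∫ s in (0:ℝ)..ξ, s / (2 * aGL (e s))

variable {ηp ηm : ℝ} {e : ℝ → ℝ}

namespace MP

lemma sq (h : IsMixingProfile ηp ηm e) (ξ : ℝ) : (e ξ) ^ 2 < 1 / 3 :=
  sq_lt_third (h.2.1 ξ)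

lemma sq1 (h : IsMixingProfile ηp ηm e) (ξ : ℝ) : (e ξ) ^ 2 < 1 := by
  have := sq h ξ; linarith

lemma a_pos (h : IsMixingProfile ηp ηm e) (ξ : ℝ) : 0 < aGL (e ξ) := aGL_pos (sq h ξ)

lemma diff (h : IsMixingProfile ηp ηm e) : Differentiable ℝ e :=
  h.1.differentiable (by norm_num)

lemma diff_deriv (h : IsMixingProfile ηp ηm e) : Differentiable ℝ (deriv e) := by
  have h2 := h.1
  rw [show (2 : WithTop ℕ∞) = 1 + 1 from rfl, contDiff_succ_iff_deriv] at h2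
  exact h2.2.2.differentiable (by norm_num)

lemma hasDerivAt_Acomp (h : IsMixingProfile ηp ηm e) (ξ : ℝ) :
    HasDerivAt (fun x => AGL (e x)) (vGL e ξ) ξ :=
  (hasDerivAt_AGL (sq1 h ξ)).comp ξ ((diff h ξ).hasDerivAt)

lemma deriv_Acomp (h : IsMixingProfile ηp ηm e) :
    deriv (fun x => AGL (e x)) = vGL e :=
  funext fun ξ => (hasDerivAt_Acomp h ξ).deriv

lemma diff_v (h : IsMixingProfile ηp ηm e) (ξ : ℝ) : DifferentiableAt ℝ (vGL e) ξ :=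
  ((differentiableAt_aGL (sq1 h ξ)).comp ξ (diff h ξ)).mul (diff_deriv h ξ)

lemma hasDerivAt_v (h : IsMixingProfile ηp ηm e) (ξ : ℝ) :
    HasDerivAt (vGL e) (-(ξ / 2) * deriv e ξ) ξ := by
  have h1 : HasDerivAt (vGL e) (deriv (vGL e) ξ) ξ := (diff_v h ξ).hasDerivAt
  have h2 : deriv (vGL e) ξ = -(ξ / 2) * deriv e ξ := by
    have := h.2.2.1 ξ
    rw [deriv_Acomp h] at this
    linarith
  rwa [h2] at h1

lemma cont_Iintegrand (h : IsMixingProfile ηp ηm e) :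
    Continuous fun s : ℝ => s / (2 * aGL (e s)) := by
  have hc : ∀ s : ℝ, ContinuousAt (fun s => s / (2 * aGL (e s))) s := by
    intro s
    apply ContinuousAt.div continuousAt_id
    · exact continuousAt_const.mul ((continuousAt_aGL (sq1 h s)).comp (diff h s).continuousAt)
    · have := a_pos h s; positivity
  exact continuous_iff_continuousAt.2 hc

lemma hasDerivAt_I (h : IsMixingProfile ηp ηm e) (ξ : ℝ) :
    HasDerivAt (IGL e) (ξ / (2 * aGL (e ξ))) ξ := by
  apply intervalIntegral.integral_hasDerivAt_right
    ((cont_Iintegrand h).intervalIntegrable _ _)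
    ((cont_Iintegrand h).stronglyMeasurableAtFilter _ _)
    (cont_Iintegrand h).continuousAt

lemma v_formula (h : IsMixingProfile ηp ηm e) (ξ : ℝ) :
    vGL e ξ = vGL e 0 * Real.exp (-(IGL e ξ)) := by
  have key : ∀ x : ℝ, vGL e x * Real.exp (IGL e x) = vGL e 0 * Real.exp (IGL e 0) := by
    intro x
    have hF : ∀ y : ℝ, HasDerivAt (fun t => vGL e t * Real.exp (IGL e t)) 0 y := by
      intro y
      have h1 := (hasDerivAt_v h y).mul ((hasDerivAt_I h y).exp)
      have ha := a_pos h y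
      have : -(y / 2) * deriv e y * Real.exp (IGL e y) +
          vGL e y * (Real.exp (IGL e y) * (y / (2 * aGL (e y)))) = 0 := by
        rw [vGL]
        field_simp
        ring
      rwa [this] at h1
    exact is_const_of_deriv_eq_zero (f := fun t => vGL e t * Real.exp (IGL e t))
      (fun y => (hF y).differentiableAt) (fun y => (hF y).deriv) x 0
  have h0 : IGL e 0 = 0 := intervalIntegral.integral_same
  have hx := key ξ
  rw [h0, Real.exp_zero, mul_one] at hx
  rw [Real.exp_neg]
  field_simp [Real.exp_ne_zero] at hx ⊢
  linarith [hx]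

lemma I_ge (h : IsMixingProfile ηp ηm e) (ξ : ℝ) : ξ ^ 2 / 4 ≤ IGL e ξ := by
  have hInt := cont_Iintegrand h
  have ha_pos := a_pos h
  have ha_le : ∀ s, aGL (e s) ≤ 1 := fun s => aGL_le_one (sq h s)
  have hid : ∀ a b : ℝ, (∫ s in a..b, s / 2) = b ^ 2 / 4 - a ^ 2 / 4 := by
    intro a b
    have : (∫ s in a..b, s / 2) = (∫ s in a..b, (s:ℝ)) / 2 := by
      rw [intervalIntegral.integral_div]
    rw [this, integral_id]
    ring
  rw [IGL]
  rcases le_or_gt 0 ξ with hξ | hξ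
  · have := intervalIntegral.integral_mono_on hξ
      ((Continuous.intervalIntegrable (by continuity) 0 ξ) :
        IntervalIntegrable (fun s : ℝ => s / 2) volume 0 ξ)
      (hInt.intervalIntegrable 0 ξ)
      (fun s hs => by
        have ha := ha_pos s; have hle := ha_le s
        rw [div_le_div_iff₀ (by norm_num) (by positivity)]
        nlinarith [hs.1])
    calc ξ ^ 2 / 4 = ∫ s in (0:ℝ)..ξ, s / 2 := by rw [hid]; ring
      _ ≤ _ := this
  · have := intervalIntegral.integral_mono_on hξ.le
      (hInt.intervalIntegrable ξ 0)
      ((Continuous.intervalIntegrable (by continuity) ξ 0) :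
        IntervalIntegrable (fun s : ℝ => s / 2) volume ξ 0)
      (fun s hs => by
        have ha := ha_pos s; have hle := ha_le s
        rw [div_le_div_iff₀ (by positivity) (by norm_num)]
        nlinarith [hs.2])
    have h0 : (∫ s in (0:ℝ)..ξ, s / (2 * aGL (e s))) =
        -(∫ s in ξ..(0:ℝ), s / (2 * aGL (e s))) := by
      rw [intervalIntegral.integral_symm]
    rw [h0]
    have h2 := hid ξ 0
    linarith [this, h2]

lemma v_tendsto (h : IsMixingProfile ηp ηm e) :
    Tendsto (vGL e) atTop (nhds 0) ∧ Tendsto (vGL e) atBot (nhds 0) := by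
  have hv := v_formula h
  have hI := I_ge h
  have hbound : ∀ ξ, ‖vGL e ξ‖ ≤ |vGL e 0| * Real.exp (-(ξ ^ 2 / 4)) := by
    intro ξ
    rw [Real.norm_eq_abs, hv ξ, abs_mul, Real.abs_exp]
    exact mul_le_mul_of_nonneg_left (Real.exp_le_exp.2 (by linarith [hI ξ])) (abs_nonneg _)
  have hsq_top : Tendsto (fun ξ : ℝ => ξ ^ 2 / 4) atTop atTop :=
    (tendsto_pow_atTop two_ne_zero).atTop_div_const (by norm_num)
  have hsq_bot : Tendsto (fun ξ : ℝ => ξ ^ 2 / 4) atBot atTop := by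
    have h1 : Tendsto (fun ξ : ℝ => (-ξ) ^ 2 / 4) atBot atTop :=
      ((tendsto_pow_atTop two_ne_zero).atTop_div_const (by norm_num)).comp
        tendsto_neg_atBot_atTop
    exact h1.congr fun ξ => by rw [neg_sq]
  have hexp : ∀ {l : Filter ℝ}, Tendsto (fun ξ : ℝ => ξ ^ 2 / 4) l atTop →
      Tendsto (fun ξ => |vGL e 0| * Real.exp (-(ξ ^ 2 / 4))) l (nhds 0) := by
    intro l hl
    have := Real.tendsto_exp_atBot.comp (tendsto_neg_atTop_atBot.comp hl)
    simpa using this.const_mul |vGL e 0|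
  exact ⟨squeeze_zero_norm hbound (hexp hsq_top), squeeze_zero_norm hbound (hexp hsq_bot)⟩

lemma deriv_e_eq (h : IsMixingProfile ηp ηm e) (ξ : ℝ) :
    deriv e ξ = vGL e ξ / aGL (e ξ) := by
  have ha := a_pos h ξ
  rw [vGL]
  field_simp

lemma v_pos (h : IsMixingProfile ηp ηm e) (hv : 0 < vGL e 0) (ξ : ℝ) : 0 < vGL e ξ := by
  rw [v_formula h ξ]
  positivity

lemma deriv_pos (h : IsMixingProfile ηp ηm e) (hv : 0 < vGL e 0) (ξ : ℝ) :
    0 < deriv e ξ := by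
  rw [deriv_e_eq h ξ]
  exact div_pos (v_pos h hv ξ) (a_pos h ξ)

lemma strictMono (h : IsMixingProfile ηp ηm e) (hv : 0 < vGL e 0) : StrictMono e :=
  strictMono_of_deriv_pos (deriv_pos h hv)

lemma const_case (h : IsMixingProfile ηp ηm e) (hv : vGL e 0 = 0) :
    (∀ ξ, e ξ = ηp) ∧ ηm = ηp := by
  have hv0 : ∀ ξ, vGL e ξ = 0 := fun ξ => by rw [v_formula h ξ, hv, zero_mul]
  have hd0 : ∀ ξ, deriv e ξ = 0 := fun ξ => by
    rw [deriv_e_eq h ξ, hv0 ξ, zero_div]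
  have hconst : ∀ ξ, e ξ = e 0 := fun ξ =>
    is_const_of_deriv_eq_zero (diff h) hd0 ξ 0
  have htop : Tendsto e atTop (nhds (e 0)) := by
    have : e = fun _ => e 0 := funext hconst
    rw [this]; exact tendsto_const_nhds
  have hbot : Tendsto e atBot (nhds (e 0)) := by
    have : e = fun _ => e 0 := funext hconst
    rw [this]; exact tendsto_const_nhds
  have hp : ηp = e 0 := tendsto_nhds_unique h.2.2.2.1 htop
  have hm : ηm = e 0 := tendsto_nhds_unique h.2.2.2.2 hbot
  exact ⟨fun ξ => by rw [hconst ξ, ← hp], by rw [hp, hm]⟩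

lemma mono_bounds (h : IsMixingProfile ηp ηm e) (hmono : StrictMono e) (ξ : ℝ) :
    ηm < e ξ ∧ e ξ < ηp := by
  constructor
  · have h1 : ηm ≤ e (ξ - 1) :=
      le_of_tendsto h.2.2.2.2 (eventually_atBot.2 ⟨ξ - 1, fun t ht => (hmono.le_iff_le).2 ht⟩)
    exact lt_of_le_of_lt h1 (hmono (by linarith))
  · have h1 : e (ξ + 1) ≤ ηp :=
      ge_of_tendsto h.2.2.2.1 (eventually_atTop.2 ⟨ξ + 1, fun t ht => (hmono.le_iff_le).2 ht⟩)
    exact lt_of_lt_of_le (hmono (by linarith)) h1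

lemma mono_surj (h : IsMixingProfile ηp ηm e) (hmono : StrictMono e)
    {y : ℝ} (hy : y ∈ Ioo ηm ηp) : ∃ ξ, e ξ = y := by
  obtain ⟨b, hb⟩ := (h.2.2.2.1.eventually_const_lt hy.2).exists_forall_of_atTop
  obtain ⟨a, ha⟩ := (h.2.2.2.2.eventually_lt_const hy.1).exists_forall_of_atBot
  have hab : a ≤ b := by
    by_contra hab
    push_neg at hab
    have := ha a le_rfl
    have := hb a hab.le
    linarith
  have hmem : y ∈ Icc (e a) (e b) := ⟨(ha a le_rfl).le, (hb b le_rfl).le⟩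
  obtain ⟨ξ, _, hξ⟩ := intermediate_value_Icc hab (diff h).continuous.continuousOn hmem
  exact ⟨ξ, hξ⟩

/-- Negation symmetry. -/
lemma neg (h : IsMixingProfile ηp ηm e) :
    IsMixingProfile (-ηp) (-ηm) (fun ξ => -(e ξ)) := by
  obtain ⟨hcd, hrange, hode, htop, hbot⟩ := h
  refine ⟨hcd.neg, ?_, ?_, htop.neg, hbot.neg⟩
  · intro ξ
    have := hrange ξ
    exact ⟨by simpa using neg_lt_neg this.2, by simpa using neg_lt_neg this.1⟩
  · intro ξ
    have hA : (fun x => AGL (-(e x))) = fun x => -(AGL (e x)) := by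
      funext x; exact AGL_neg (e x)
    have hd1 : deriv (fun x => AGL (-(e x))) = fun x => -(deriv (fun y => AGL (e y)) x) := by
      rw [hA]
      funext x
      exact deriv.neg
    have hd2 : deriv (deriv (fun x => AGL (-(e x)))) ξ
        = -(deriv (deriv (fun y => AGL (e y))) ξ) := by
      rw [hd1]
      exact deriv.neg
    have hd3 : deriv (fun x => -(e x)) ξ = -(deriv e ξ) := deriv.neg
    rw [hd2, hd3]
    have := hode ξ
    linarith

lemma v_neg_zero (h : IsMixingProfile ηp ηm e) :
    vGL (fun ξ => -(e ξ)) 0 = -(vGL e 0) := by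
  rw [vGL, vGL]
  have : deriv (fun ξ => -(e ξ)) 0 = -(deriv e 0) := deriv.neg
  rw [this, aGL_even]
  ring

end MP

/-! ### The first-order maximum principle -/

lemma key_max_principle {G ψ p q : ℝ → ℝ} (hp : ∀ x, 0 < p x) (hq : ∀ x, 0 < q x)
    (hG : ∀ x, HasDerivAt G (p x * ψ x) x) (hψ : ∀ x, HasDerivAt ψ (q x * G x) x)
    (htop : Tendsto G atTop (nhds 0)) (hbot : Tendsto G atBot (nhds 0)) (x : ℝ) :
    G x ≤ 0 := by
  by_contra hc
  push_neg at hc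
  have contG : Continuous G := continuous_iff_continuousAt.2 fun y => (hG y).continuousAt
  have contψ : Continuous ψ := continuous_iff_continuousAt.2 fun y => (hψ y).continuousAt
  obtain ⟨B, hB⟩ := (htop.eventually_lt_const hc).exists_forall_of_atTop
  obtain ⟨B', hB'⟩ := (hbot.eventually_lt_const hc).exists_forall_of_atBot
  set l := min B' x with hl
  set r := max B x with hr
  have hxmem : x ∈ Icc l r := ⟨min_le_right _ _, le_max_right _ _⟩
  obtain ⟨ξ₀, hξ₀mem, hξ₀max⟩ :=
    isCompact_Icc.exists_isMaxOn (Set.nonempty_of_mem hxmem) contG.continuousOn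
  have hglob : ∀ ξ, G ξ ≤ G ξ₀ := by
    intro ξ
    rcases le_or_gt ξ r with h1 | h1
    · rcases le_or_gt l ξ with h2 | h2
      · exact hξ₀max ⟨h2, h1⟩
      · have : G ξ < G x := hB' ξ (le_trans h2.le (min_le_left _ _))
        exact this.le.trans (hξ₀max hxmem)
    · have : G ξ < G x := hB ξ (le_trans (le_max_left _ _) h1.le)
      exact this.le.trans (hξ₀max hxmem)
  have hMpos : 0 < G ξ₀ := lt_of_lt_of_le hc (hξ₀max hxmem)
  have hlocmax : IsLocalMax G ξ₀ := Filter.Eventually.of_forall hglob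
  have hψ0 : ψ ξ₀ = 0 := by
    have hd := hlocmax.deriv_eq_zero
    rw [(hG ξ₀).deriv] at hd
    rcases mul_eq_zero.1 hd with h | h
    · exact absurd h (ne_of_gt (hp ξ₀))
    · exact h
  have hev : ∀ᶠ y in nhds ξ₀, 0 < G y := contG.continuousAt.eventually_const_lt hMpos
  obtain ⟨ε, hε, hball⟩ := Metric.eventually_nhds_iff.1 hev
  set δ := ε / 2 with hδ
  have hδpos : 0 < δ := by positivity
  have hGpos : ∀ y ∈ Icc ξ₀ (ξ₀ + δ), 0 < G y := by
    intro y hy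
    apply hball
    rw [Real.dist_eq, abs_lt]
    constructor <;> [linarith [hy.1]; linarith [hy.2]]
  have hψmono : StrictMonoOn ψ (Icc ξ₀ (ξ₀ + δ)) := by
    apply strictMonoOn_of_deriv_pos (convex_Icc _ _) contψ.continuousOn
    intro y hy
    rw [interior_Icc] at hy
    rw [(hψ y).deriv]
    exact mul_pos (hq y) (hGpos y ⟨hy.1.le, hy.2.le⟩)
  have hψpos : ∀ y ∈ Ioc ξ₀ (ξ₀ + δ), 0 < ψ y := by
    intro y hy
    have := hψmono ⟨le_refl _, by linarith [hδpos]⟩ ⟨hy.1.le, hy.2⟩ hy.1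
    rwa [hψ0] at this
  have hGmono : StrictMonoOn G (Icc ξ₀ (ξ₀ + δ)) := by
    apply strictMonoOn_of_deriv_pos (convex_Icc _ _) contG.continuousOn
    intro y hy
    rw [interior_Icc] at hy
    rw [(hG y).deriv]
    exact mul_pos (hp y) (hψpos y ⟨hy.1, hy.2.le⟩)
  have : G ξ₀ < G (ξ₀ + δ) :=
    hGmono ⟨le_refl _, by linarith⟩ ⟨by linarith, le_refl _⟩ (by linarith)
  exact absurd (hglob (ξ₀ + δ)) (not_le.2 this)

/-! ### The main comparison argument (both profiles increasing) -/

lemma uniqueness_pos {ηp ηm : ℝ} {e₁ e₂ : ℝ → ℝ}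
    (h₁ : IsMixingProfile ηp ηm e₁) (h₂ : IsMixingProfile ηp ηm e₂)
    (hv₁ : 0 < vGL e₁ 0) (hv₂ : 0 < vGL e₂ 0) : e₁ = e₂ := by
  classical
  have v₁pos := MP.v_pos h₁ hv₁
  have v₂pos := MP.v_pos h₂ hv₂
  have d₁pos := MP.deriv_pos h₁ hv₁
  have d₂pos := MP.deriv_pos h₂ hv₂
  have d₂ne : ∀ ζ, deriv e₂ ζ ≠ 0 := fun ζ => ne_of_gt (d₂pos ζ)
  have mono₁ := MP.strictMono h₁ hv₁
  have mono₂ := MP.strictMono h₂ hv₂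
  have bounds₁ := MP.mono_bounds h₁ mono₁
  have bounds₂ := MP.mono_bounds h₂ mono₂
  have hφex : ∀ ξ, ∃ ζ, e₂ ζ = e₁ ξ := fun ξ =>
    MP.mono_surj h₂ mono₂ ⟨(bounds₁ ξ).1, (bounds₁ ξ).2⟩
  choose φ hφ using hφex
  -- the global inverse of e₂
  set ρ : ℝ → ℝ := fun y => if hy : ∃ x, e₂ x = y then hy.choose else 0 with hρdef
  have hρ : ∀ x, ρ (e₂ x) = x := by
    intro x
    have hy : ∃ z, e₂ z = e₂ x := ⟨x, rfl⟩
    simp only [hρdef, dif_pos hy]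
    exact mono₂.injective hy.choose_spec
  have hφρ : ∀ ξ, φ ξ = ρ (e₁ ξ) := fun ξ => by rw [← hφ ξ, hρ]
  have hstrict₂ : ∀ ζ, HasStrictDerivAt e₂ (deriv e₂ ζ) ζ := fun ζ =>
    h₂.1.contDiffAt.hasStrictDerivAt (by norm_num)
  have hρderiv : ∀ ζ, HasDerivAt ρ (deriv e₂ ζ)⁻¹ (e₂ ζ) := fun ζ =>
    ((hstrict₂ ζ).to_local_left_inverse (d₂ne ζ)
      (Filter.Eventually.of_forall hρ)).hasDerivAt
  have hφderiv : ∀ ξ, HasDerivAt φ ((deriv e₂ (φ ξ))⁻¹ * deriv e₁ ξ) ξ := by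
    intro ξ
    have h1 : HasDerivAt ρ (deriv e₂ (φ ξ))⁻¹ (e₁ ξ) := by
      rw [← hφ ξ]; exact hρderiv (φ ξ)
    have h2 := h1.comp ξ ((MP.diff h₁ ξ).hasDerivAt)
    exact h2.congr_of_eventuallyEq (Filter.Eventually.of_forall hφρ)
  set G : ℝ → ℝ := fun ξ => vGL e₁ ξ - vGL e₂ (φ ξ) with hGdef
  set ψ : ℝ → ℝ := fun ξ => φ ξ - ξ with hψdef
  set p : ℝ → ℝ := fun ξ => deriv e₁ ξ / 2 with hpdef
  set q : ℝ → ℝ := fun ξ => 1 / vGL e₂ (φ ξ) with hqdef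
  have hp : ∀ ξ, 0 < p ξ := fun ξ => div_pos (d₁pos ξ) two_pos
  have hq : ∀ ξ, 0 < q ξ := fun ξ => by
    simp only [hqdef]
    exact one_div_pos.2 (v₂pos (φ ξ))
  have hGderiv : ∀ ξ, HasDerivAt G (p ξ * ψ ξ) ξ := by
    intro ξ
    have hv2φ := (MP.hasDerivAt_v h₂ (φ ξ)).comp ξ (hφderiv ξ)
    have h1 := (MP.hasDerivAt_v h₁ ξ).sub hv2φ
    have h2 : -(ξ / 2) * deriv e₁ ξ -
        -(φ ξ / 2) * deriv e₂ (φ ξ) * ((deriv e₂ (φ ξ))⁻¹ * deriv e₁ ξ) = p ξ * ψ ξ := by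
      have hne := d₂ne (φ ξ)
      simp only [hpdef, hψdef]
      field_simp
      ring
    rwa [h2] at h1
  have hψderiv : ∀ ξ, HasDerivAt ψ (q ξ * G ξ) ξ := by
    intro ξ
    have h1 := (hφderiv ξ).sub (hasDerivAt_id ξ)
    have h2 : (deriv e₂ (φ ξ))⁻¹ * deriv e₁ ξ - 1 = q ξ * G ξ := by
      have ha := MP.a_pos h₁ ξ
      have hv2 := v₂pos (φ ξ)
      rw [MP.deriv_e_eq h₂ (φ ξ), MP.deriv_e_eq h₁ ξ, hφ ξ]
      simp only [hqdef, hGdef]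
      rw [inv_div]
      field_simp
    rwa [h2] at h1
  -- φ escapes to ±∞
  have φtop : Tendsto φ atTop atTop := by
    rw [tendsto_atTop]
    intro M
    have h1 : ∀ᶠ ξ in atTop, e₂ M < e₁ ξ :=
      h₁.2.2.2.1.eventually_const_lt (bounds₂ M).2
    filter_upwards [h1] with ξ hξ
    by_contra hcon
    push_neg at hcon
    have := mono₂.le_iff_le.2 hcon.le
    rw [hφ ξ] at this
    exact absurd this (not_le.2 hξ)
  have φbot : Tendsto φ atBot atBot := by
    rw [tendsto_atBot]
    intro M
    have h1 : ∀ᶠ ξ in atBot, e₁ ξ < e₂ M :=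
      h₁.2.2.2.2.eventually_lt_const (bounds₂ M).1
    filter_upwards [h1] with ξ hξ
    by_contra hcon
    push_neg at hcon
    have := mono₂.le_iff_le.2 hcon.le
    rw [hφ ξ] at this
    exact absurd this (not_le.2 hξ)
  have Gtop : Tendsto G atTop (nhds 0) := by
    have := ((MP.v_tendsto h₁).1).sub (((MP.v_tendsto h₂).1).comp φtop)
    simpa using this
  have Gbot : Tendsto G atBot (nhds 0) := by
    have := ((MP.v_tendsto h₁).2).sub (((MP.v_tendsto h₂).2).comp φbot)
    simpa using this
  have hle := key_max_principle hp hq hGderiv hψderiv Gtop Gbot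
  have hGderiv' : ∀ ξ, HasDerivAt (fun t => -(G t)) (p ξ * (-(ψ ξ))) ξ := by
    intro ξ
    have := (hGderiv ξ).neg
    rwa [show -(p ξ * ψ ξ) = p ξ * (-(ψ ξ)) by ring] at this
  have hψderiv' : ∀ ξ, HasDerivAt (fun t => -(ψ t)) (q ξ * (-(G ξ))) ξ := by
    intro ξ
    have := (hψderiv ξ).neg
    rwa [show -(q ξ * G ξ) = q ξ * (-(G ξ)) by ring] at this
  have hge := key_max_principle (G := fun t => -(G t)) (ψ := fun t => -(ψ t)) hp hq
    hGderiv' hψderiv' (by simpa using Gtop.neg) (by simpa using Gbot.neg)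
  have hG0 : ∀ ξ, G ξ = 0 := fun ξ => le_antisymm (hle ξ) (neg_nonpos.1 (hge ξ))
  have hψ0 : ∀ ξ, ψ ξ = 0 := by
    intro ξ
    have hd : deriv G ξ = p ξ * ψ ξ := (hGderiv ξ).deriv
    have hGfun : G = fun _ => 0 := funext hG0
    rw [hGfun, deriv_const] at hd
    rcases mul_eq_zero.1 hd.symm with h | h
    · exact absurd h (ne_of_gt (hp ξ))
    · exact h
  funext ξ
  have hφid : φ ξ = ξ := by
    have := hψ0 ξ
    simp only [hψdef] at this
    linarith
  rw [← hφ ξ, hφid]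

/-! ### Main theorem -/

/-- Uniqueness of the mixing profile. -/
theorem uniqueness_mixing_profile
    (ηp ηm : ℝ)
    (hp : ηp ∈ Set.Ioo (-(1 / Real.sqrt 3)) (1 / Real.sqrt 3))
    (hm : ηm ∈ Set.Ioo (-(1 / Real.sqrt 3)) (1 / Real.sqrt 3))
    (e₁ e₂ : ℝ → ℝ)
    (h₁ : IsMixingProfile ηp ηm e₁)
    (h₂ : IsMixingProfile ηp ηm e₂) :
    e₁ = e₂ := by
  have signz : ∀ e : ℝ → ℝ, IsMixingProfile ηp ηm e → vGL e 0 = 0 → ηm = ηp :=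
    fun e h hv => (MP.const_case h hv).2
  have signp : ∀ e : ℝ → ℝ, IsMixingProfile ηp ηm e → 0 < vGL e 0 → ηm < ηp := by
    intro e h hv
    have hb := MP.mono_bounds h (MP.strictMono h hv) 0
    linarith [hb.1, hb.2]
  have signn : ∀ e : ℝ → ℝ, IsMixingProfile ηp ηm e → vGL e 0 < 0 → ηp < ηm := by
    intro e h hv
    have h' := MP.neg h
    have hv' : 0 < vGL (fun ξ => -(e ξ)) 0 := by rw [MP.v_neg_zero h]; linarith
    have hb := MP.mono_bounds h' (MP.strictMono h' hv') 0
    linarith [hb.1, hb.2]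
  rcases lt_trichotomy (vGL e₁ 0) 0 with h1 | h1 | h1
  · -- e₁ decreasing
    have hpm : ηp < ηm := signn e₁ h₁ h1
    have hv₂ : vGL e₂ 0 < 0 := by
      rcases lt_trichotomy (vGL e₂ 0) 0 with h2 | h2 | h2
      · exact h2
      · exact absurd (signz e₂ h₂ h2) (by linarith)
      · exact absurd (signp e₂ h₂ h2) (by linarith)
    have hv₁' : 0 < vGL (fun ξ => -(e₁ ξ)) 0 := by rw [MP.v_neg_zero h₁]; linarith
    have hv₂' : 0 < vGL (fun ξ => -(e₂ ξ)) 0 := by rw [MP.v_neg_zero h₂]; linarith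
    have := uniqueness_pos (MP.neg h₁) (MP.neg h₂) hv₁' hv₂'
    funext ξ
    have hξ := congrFun this ξ
    linarith [hξ, neg_eq_iff_eq_neg.1 hξ]
  · -- e₁ constant
    have hc₁ := MP.const_case h₁ h1
    have hv₂ : vGL e₂ 0 = 0 := by
      rcases lt_trichotomy (vGL e₂ 0) 0 with h2 | h2 | h2
      · exact absurd (signn e₂ h₂ h2) (by linarith [hc₁.2])
      · exact h2
      · exact absurd (signp e₂ h₂ h2) (by linarith [hc₁.2])
    have hc₂ := MP.const_case h₂ hv₂
    funext ξ
    rw [hc₁.1 ξ, hc₂.1 ξ]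
  · -- e₁ increasing
    have hmp : ηm < ηp := signp e₁ h₁ h1
    have hv₂ : 0 < vGL e₂ 0 := by
      rcases lt_trichotomy (vGL e₂ 0) 0 with h2 | h2 | h2
      · exact absurd (signn e₂ h₂ h2) (by linarith)
      · exact absurd (signz e₂ h₂ h2) (by linarith)
      · exact h2
    exact uniqueness_pos h₁ h₂ h1 hv₂
end
end

section
/- Representation formula for the profile derivative: let η̃ : ℝ → (−1/√3, 1/√3) be twice continuously differentiable and satisfy (d²/dξ²)[A(η̃(ξ))] + (ξ/2)·η̃′(ξ) = 0 for all ξ ∈ ℝ. Then for every ξ₀, ξ ∈ ℝ one has η̃′(ξ) = [a(η̃(ξ₀))·η̃′(ξ₀) / a(η̃(ξ))] · exp(−∫_{ξ₀}^{ξ} y/(2·a(η̃(y))) dy). In particular, if η̃′(ξ₀) = 0 for some ξ₀ then η̃ is constant. -/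
noncomputable section

open Real Filter MeasureTheory Set

lemma aGL_hasDerivAt_AGL (x : ℝ) (hx : x ^ 2 < 1) : HasDerivAt AGL (aGL x) x := by
  have hm : Measurable aGL := by
    apply Measurable.div <;> fun_prop
  have hcont : ∀ y : ℝ, y ^ 2 < 1 → ContinuousAt aGL y := by
    intro y hy
    apply ContinuousAt.div (by fun_prop) (by fun_prop)
    nlinarith
  have hint : IntervalIntegrable aGL volume 0 x := by
    apply ContinuousOn.intervalIntegrable
    intro y hy
    rw [Set.mem_uIcc] at hy
    exact (hcont y (by rcases hy with ⟨h1,h2⟩|⟨h1,h2⟩ <;> nlinarith)).continuousWithinAt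
  exact intervalIntegral.integral_hasDerivAt_right hint
    (hm.stronglyMeasurable.aestronglyMeasurable.stronglyMeasurableAtFilter) (hcont x hx)

lemma aGL_diffAt (x : ℝ) (hx : x ^ 2 < 1) : DifferentiableAt ℝ aGL x := by
  apply DifferentiableAt.div (by fun_prop) (by fun_prop)
  nlinarith

/-- Representation formula for the derivative of a solution of the profile ODE,
and the resulting rigidity: if the derivative vanishes somewhere, the solution
is constant. -/
theorem profile_deriv_representation
    (e : ℝ → ℝ) (hreg : ContDiff ℝ 2 e)
    (hrange : ∀ ξ, e ξ ∈ Set.Ioo (-(1 / Real.sqrt 3)) (1 / Real.sqrt 3))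
    (hode : ∀ ξ, deriv (deriv (fun x => AGL (e x))) ξ + ξ / 2 * deriv e ξ = 0) :
    (∀ ξ₀ ξ : ℝ,
      deriv e ξ = aGL (e ξ₀) * deriv e ξ₀ / aGL (e ξ) *
        Real.exp (-∫ y in ξ₀..ξ, y / (2 * aGL (e y)))) ∧
    (∀ ξ₀ : ℝ, deriv e ξ₀ = 0 → ∀ ξ : ℝ, e ξ = e ξ₀) := by
  -- range bounds
  have hs3 : ((1 : ℝ) / Real.sqrt 3) ^ 2 = 1 / 3 := by
    rw [div_pow, one_pow, Real.sq_sqrt (by norm_num : (3:ℝ) ≥ 0)]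
  have hsq : ∀ ξ, (e ξ) ^ 2 < 1 / 3 := by
    intro ξ
    have h := hrange ξ
    have h2 := sq_lt_sq' h.1 h.2
    rwa [hs3] at h2
  have hpos : ∀ ξ, 0 < aGL (e ξ) := by
    intro ξ
    have h := hsq ξ
    exact div_pos (by linarith) (by nlinarith)
  have hne : ∀ ξ, aGL (e ξ) ≠ 0 := fun ξ => (hpos ξ).ne'
  have hsq1 : ∀ ξ, (e ξ) ^ 2 < 1 := fun ξ => lt_trans (hsq ξ) (by norm_num)
  -- differentiability of e and deriv e
  have he1 : Differentiable ℝ e := hreg.differentiable (by norm_num)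
  have hde : ContDiff ℝ 1 (deriv e) := by
    have : ContDiff ℝ (1 + 1) e := by norm_num; exact hreg
    exact (contDiff_succ_iff_deriv.mp this).2.2
  have hde1 : Differentiable ℝ (deriv e) := hde.differentiable (by norm_num)
  have hdec : Continuous (deriv e) := hde.continuous
  -- g = a(e)·e′ is the derivative of A∘e
  set g : ℝ → ℝ := fun ξ => aGL (e ξ) * deriv e ξ with hg_def
  have hAe : ∀ ξ, HasDerivAt (fun x => AGL (e x)) (g ξ) ξ := by
    intro ξ
    exact (aGL_hasDerivAt_AGL (e ξ) (hsq1 ξ)).comp ξ (he1 ξ).hasDerivAt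
  have hderivAe : deriv (fun x => AGL (e x)) = g := funext fun ξ => (hAe ξ).deriv
  -- g is differentiable with derivative -(ξ/2)·e′ ξ
  have hgdiff : Differentiable ℝ g := by
    intro ξ
    exact (((aGL_diffAt (e ξ) (hsq1 ξ)).comp ξ (he1 ξ)).mul (hde1 ξ))
  have hg' : ∀ ξ, HasDerivAt g (-(ξ / 2 * deriv e ξ)) ξ := by
    intro ξ
    have h1 : HasDerivAt g (deriv g ξ) ξ := (hgdiff ξ).hasDerivAt
    have h2 : deriv g ξ = -(ξ / 2 * deriv e ξ) := by
      have := hode ξ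
      rw [hderivAe] at this
      linarith
    rwa [h2] at h1
  -- the continuous coefficient b
  set b : ℝ → ℝ := fun y => y / (2 * aGL (e y)) with hb_def
  have haec : Continuous (fun y => aGL (e y)) := by
    have : (fun y => aGL (e y)) =
        fun y => (1 - 3 * (e y) ^ 2) / (1 - (e y) ^ 2) := rfl
    rw [this]
    apply Continuous.div (by fun_prop) (by fun_prop)
    intro y; nlinarith [hsq1 y]
  have hbc : Continuous b := by
    apply Continuous.div continuous_id (by fun_prop)
    intro y
    have := hpos y; positivity
  -- part 1
  have main : ∀ ξ₀ ξ : ℝ,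
      deriv e ξ = aGL (e ξ₀) * deriv e ξ₀ / aGL (e ξ) *
        Real.exp (-∫ y in ξ₀..ξ, y / (2 * aGL (e y))) := by
    intro ξ₀ ξ
    set B : ℝ → ℝ := fun x => ∫ y in ξ₀..x, b y with hB_def
    have hB' : ∀ x, HasDerivAt B (b x) x := by
      intro x
      exact intervalIntegral.integral_hasDerivAt_right
        (hbc.intervalIntegrable _ _)
        (hbc.aestronglyMeasurable.stronglyMeasurableAtFilter) hbc.continuousAt
    set h : ℝ → ℝ := fun x => g x * Real.exp (B x) with hh_def
    have hh' : ∀ x, HasDerivAt h 0 x := by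
      intro x
      have h1 : HasDerivAt h (-(x / 2 * deriv e x) * Real.exp (B x) +
          g x * (Real.exp (B x) * b x)) x :=
        (hg' x).mul ((hB' x).exp)
      have h2 : -(x / 2 * deriv e x) * Real.exp (B x) +
          g x * (Real.exp (B x) * b x) = 0 := by
        have ha := hne x
        simp only [hg_def, hb_def]
        field_simp
        ring
      rwa [h2] at h1
    have hconst : h ξ = h ξ₀ := by
      have hd : Differentiable ℝ h := fun x => (hh' x).differentiableAt
      have hz : ∀ x, deriv h x = 0 := fun x => (hh' x).deriv
      exact is_const_of_deriv_eq_zero hd hz ξ ξ₀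
    have hB0 : B ξ₀ = 0 := by simp [hB_def]
    have hgval : g ξ = g ξ₀ * Real.exp (-B ξ) := by
      have := hconst
      simp only [hh_def, hB0, Real.exp_zero, mul_one] at this
      rw [Real.exp_neg]
      field_simp
      linarith [this]
    have hBint : B ξ = ∫ y in ξ₀..ξ, y / (2 * aGL (e y)) := rfl
    rw [← hBint]
    have ha := hne ξ
    have h1 : aGL (e ξ) * deriv e ξ = aGL (e ξ₀) * deriv e ξ₀ * Real.exp (-B ξ) := hgval
    field_simp
    linarith [h1]
  refine ⟨main, ?_⟩
  intro ξ₀ h0 ξ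
  have hz : ∀ x, deriv e x = 0 := by
    intro x
    rw [main ξ₀ x, h0]
    simp
  exact is_const_of_deriv_eq_zero he1 hz ξ ξ₀
end
end

section
/- Contraction for the rescaled phase diffusion equation: let η̃ be a mixing profile for η₊, η₋ ∈ (−1/√3, 1/√3) and Ñ(ξ) = η₋·ξ + ∫_{−∞}^ξ [η̃(s) − η₋] ds. Let ψ₁, ψ₂ : [0, ∞) × ℝ → ℝ be smooth functions such that for each τ ≥ 0 the functions ψⱼ(τ, ·) and ∂τψⱼ(τ, ·) are Schwartz functions of ξ, depending continuously on τ in every Schwartz seminorm, and such that each ψⱼ satisfies the equation ∂τψ = ∂ξ[A(η̃ + ∂ξψ)] + (ξ/2)·(η̃ + ∂ξψ) − (1/2)·(Ñ + ψ) pointwise, with η̃(ξ) + ∂ξψⱼ(τ, ξ) ∈ (−1/√3, 1/√3) for all τ ≥ 0 and ξ ∈ ℝ. Then for all τ ≥ 0: (∫_ℝ (ψ₁(τ,ξ) − ψ₂(τ,ξ))² dξ)^{1/2} ≤ e^{−3τ/4} · (∫_ℝ (ψ₁(0,ξ) − ψ₂(0,ξ))² dξ)^{1/2}. -/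
noncomputable section

open Real Filter MeasureTheory Set

/-- The antiderivative `Ñ(ξ) = η₋ ξ + ∫_{-∞}^ξ (η̃(s) - η₋) ds`. -/
def NGL (e : ℝ → ℝ) (ηm : ℝ) (ξ : ℝ) : ℝ :=
  ηm * ξ + ∫ s in Set.Iic ξ, (e s - ηm)

namespace PDHelp


lemma sq_lt_third {x : ℝ} (hx : x ∈ Set.Ioo (-(1 / Real.sqrt 3)) (1 / Real.sqrt 3)) :
    x ^ 2 < 1 / 3 := by
  have h3 : (0:ℝ) < Real.sqrt 3 := Real.sqrt_pos.2 (by norm_num)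
  have habs : |x| < 1 / Real.sqrt 3 := abs_lt.2 ⟨hx.1, hx.2⟩
  have h1 : x ^ 2 = |x| ^ 2 := (sq_abs x).symm
  have h2 : |x| ^ 2 < (1 / Real.sqrt 3) ^ 2 :=
    pow_lt_pow_left₀ habs (abs_nonneg x) (by norm_num)
  have h4 : (1 / Real.sqrt 3 : ℝ) ^ 2 = 1 / 3 := by
    rw [div_pow, one_pow, Real.sq_sqrt (by norm_num : (0:ℝ) ≤ 3)]
  rw [h1, ← h4]; exact h2

lemma aGL_nonneg {x : ℝ} (hx : x ^ 2 ≤ 1 / 3) : 0 ≤ aGL x :=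
  div_nonneg (by nlinarith) (by nlinarith)

lemma aGL_le {x : ℝ} (hx : x ^ 2 ≤ 1 / 3) : aGL x ≤ 3 / 2 := by
  rw [aGL, div_le_iff₀ (by nlinarith)]; nlinarith

lemma aGL_contOn : ContinuousOn aGL (Set.Ioo (-1 : ℝ) 1) := by
  apply ContinuousOn.div (by fun_prop) (by fun_prop)
  intro x hx
  have := hx.1; have := hx.2; nlinarith

lemma mem_Ioo_one {x : ℝ} (hx : x ^ 2 ≤ 1 / 3) : x ∈ Set.Ioo (-1 : ℝ) 1 := by
  constructor <;> nlinarith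

lemma intervalIntegrable_aGL {a b : ℝ} (ha : a ^ 2 ≤ 1/3) (hb : b ^ 2 ≤ 1/3) :
    IntervalIntegrable aGL volume a b := by
  apply (aGL_contOn.mono ?_).intervalIntegrable
  intro x hx
  rcases Set.mem_uIcc.1 hx with h | h <;>
    constructor <;> nlinarith [h.1, h.2, mem_Ioo_one ha, mem_Ioo_one hb,
      (mem_Ioo_one ha).1, (mem_Ioo_one ha).2, (mem_Ioo_one hb).1, (mem_Ioo_one hb).2]

lemma AGL_sub_eq {u v : ℝ} (hu : u ^ 2 ≤ 1/3) (hv : v ^ 2 ≤ 1/3) :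
    AGL u - AGL v = ∫ x in v..u, aGL x := by
  rw [AGL, AGL]
  exact intervalIntegral.integral_interval_sub_left
    (intervalIntegrable_aGL (by norm_num) hu) (intervalIntegrable_aGL (by norm_num) hv)

lemma sq_le_of_mem_uIcc {u v x : ℝ} (hu : u ^ 2 ≤ 1/3) (hv : v ^ 2 ≤ 1/3)
    (hx : x ∈ Set.uIcc v u) : x ^ 2 ≤ 1/3 := by
  have key : ∀ a b : ℝ, a ≤ x → x ≤ b → a ^ 2 ≤ 1/3 → b ^ 2 ≤ 1/3 → x ^ 2 ≤ 1/3 := by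
    intro a b h1 h2 ha hb
    have habs : |x| ≤ max |a| |b| := abs_le_max_abs_abs h1 h2
    have hsq : x ^ 2 ≤ (max |a| |b|) ^ 2 := by
      rw [← sq_abs x]; exact pow_le_pow_left₀ (abs_nonneg _) habs 2
    rcases max_cases |a| |b| with ⟨hm, _⟩ | ⟨hm, _⟩ <;> rw [hm] at hsq <;>
      rw [sq_abs] at hsq <;> linarith
  rcases Set.mem_uIcc.1 hx with h | h
  · exact key v u h.1 h.2 hv hu
  · exact key u v h.1 h.2 hu hv

lemma AGL_mono_prod {u v : ℝ} (hu : u ^ 2 ≤ 1/3) (hv : v ^ 2 ≤ 1/3) :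
    0 ≤ (AGL u - AGL v) * (u - v) := by
  rw [AGL_sub_eq hu hv]
  rcases le_total v u with h | h
  · apply mul_nonneg _ (by linarith)
    apply intervalIntegral.integral_nonneg h
    intro x hx
    exact aGL_nonneg (sq_le_of_mem_uIcc hu hv (by rw [Set.uIcc_of_le h]; exact hx))
  · rw [intervalIntegral.integral_symm]
    have h1 : (0:ℝ) ≤ ∫ x in u..v, aGL x := by
      apply intervalIntegral.integral_nonneg h
      intro x hx
      exact aGL_nonneg (sq_le_of_mem_uIcc hu hv (by rw [Set.uIcc_comm, Set.uIcc_of_le h]; exact hx))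
    nlinarith

lemma AGL_lipschitz {u v : ℝ} (hu : u ^ 2 ≤ 1/3) (hv : v ^ 2 ≤ 1/3) :
    |AGL u - AGL v| ≤ 3 / 2 * |u - v| := by
  rw [AGL_sub_eq hu hv, ← Real.norm_eq_abs]
  apply intervalIntegral.norm_integral_le_of_norm_le_const
  intro x hx
  rw [Real.norm_eq_abs, abs_le]
  have hx' : x ^ 2 ≤ 1/3 := sq_le_of_mem_uIcc hu hv (Set.uIoc_subset_uIcc hx)
  exact ⟨by nlinarith [aGL_nonneg hx'], aGL_le hx'⟩

lemma hasDerivAt_AGL {y : ℝ} (hy : y ^ 2 ≤ 1/3) : HasDerivAt AGL (aGL y) y := by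
  apply intervalIntegral.integral_hasDerivAt_right (intervalIntegrable_aGL (by norm_num) hy)
  · exact ContinuousOn.stronglyMeasurableAtFilter isOpen_Ioo aGL_contOn y (mem_Ioo_one hy)
  · exact aGL_contOn.continuousAt (isOpen_Ioo.mem_nhds (mem_Ioo_one hy))



lemma eval_continuous (ξ : ℝ) : Continuous fun f : SchwartzMap ℝ ℝ => f ξ := by
  have h1 : Continuous fun f : SchwartzMap ℝ ℝ => SchwartzMap.toBoundedContinuousFunctionCLM ℝ ℝ ℝ f :=
    (SchwartzMap.toBoundedContinuousFunctionCLM ℝ ℝ ℝ).continuous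
  have h2 := (continuous_eval_const (F := BoundedContinuousFunction ℝ ℝ) ξ).comp h1
  exact h2

lemma seminorm_continuous (k n : ℕ) :
    Continuous fun f : SchwartzMap ℝ ℝ => SchwartzMap.seminorm ℝ k n f :=
  (schwartz_withSeminorms ℝ ℝ ℝ).continuous_seminorm (k, n)

/-- Uniform decay bound for a compactly-parametrized continuous family of Schwartz functions. -/
lemma fam_decay_bound {Φ : ℝ → SchwartzMap ℝ ℝ} {K : Set ℝ} (hK : IsCompact K)
    (h : ContinuousOn Φ K) :
    ∃ C, 0 ≤ C ∧ ∀ τ ∈ K, ∀ ξ : ℝ, (1 + ξ ^ 2) * |Φ τ ξ| ≤ C := by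
  have hc : ContinuousOn
      (fun τ => SchwartzMap.seminorm ℝ 0 0 (Φ τ) + SchwartzMap.seminorm ℝ 2 0 (Φ τ)) K :=
    ((seminorm_continuous 0 0).comp_continuousOn h).add
      ((seminorm_continuous 2 0).comp_continuousOn h)
  obtain ⟨C, hC⟩ := hK.exists_bound_of_continuousOn hc
  refine ⟨max C 0, le_max_right _ _, fun τ hτ ξ => ?_⟩
  have h0 : |Φ τ ξ| ≤ SchwartzMap.seminorm ℝ 0 0 (Φ τ) := by
    simpa [Real.norm_eq_abs] using SchwartzMap.norm_le_seminorm ℝ (Φ τ) ξ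
  have h2 : ξ ^ 2 * |Φ τ ξ| ≤ SchwartzMap.seminorm ℝ 2 0 (Φ τ) := by
    have := SchwartzMap.norm_pow_mul_le_seminorm ℝ (Φ τ) 2 ξ
    simpa [Real.norm_eq_abs, sq_abs] using this
  have hCb := hC τ hτ
  rw [Real.norm_eq_abs] at hCb
  have hle : SchwartzMap.seminorm ℝ 0 0 (Φ τ) + SchwartzMap.seminorm ℝ 2 0 (Φ τ) ≤ max C 0 :=
    le_trans (le_abs_self _) (le_max_of_le_left hCb)
  nlinarith [abs_nonneg (Φ τ ξ)]

lemma schwartz_mul_integrable (f g : SchwartzMap ℝ ℝ) :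
    Integrable (fun x => f x * g x) volume :=
  g.integrable.bdd_mul f.continuous.aestronglyMeasurable
    (Filter.Eventually.of_forall fun x => SchwartzMap.norm_le_seminorm ℝ f x)

lemma schwartz_xmul_integrable (f g : SchwartzMap ℝ ℝ) :
    Integrable (fun x => x * (f x * g x)) volume := by
  refine ((f.integrable_pow_mul volume 1).const_mul
    (SchwartzMap.seminorm ℝ 0 0 g)).mono' ?_ ?_
  · exact (continuous_id.mul (f.continuous.mul g.continuous)).aestronglyMeasurable
  · refine Filter.Eventually.of_forall fun x => ?_
    have hg : |g x| ≤ SchwartzMap.seminorm ℝ 0 0 g := by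
      simpa [Real.norm_eq_abs] using SchwartzMap.norm_le_seminorm ℝ g x
    have : ‖x * (f x * g x)‖ = |x| * |f x| * |g x| := by
      rw [Real.norm_eq_abs, abs_mul, abs_mul]; ring
    rw [this]
    calc |x| * |f x| * |g x| ≤ |x| * |f x| * SchwartzMap.seminorm ℝ 0 0 g := by
          apply mul_le_mul_of_nonneg_left hg (by positivity)
      _ = SchwartzMap.seminorm ℝ 0 0 g * (‖x‖ ^ 1 * ‖f x‖) := by
          simp [Real.norm_eq_abs]; ring

/-- The key dissipativity estimate at a fixed time. -/
lemma key_estimate (e : ℝ → ℝ) (heC2 : ContDiff ℝ 2 e)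
    (f₁ f₂ df₁ df₂ : SchwartzMap ℝ ℝ)
    (heq : ∀ ξ : ℝ, df₁ ξ - df₂ ξ =
      (deriv (fun x => AGL (e x + deriv f₁ x)) ξ
        - deriv (fun x => AGL (e x + deriv f₂ x)) ξ)
      + ξ / 2 * (deriv f₁ ξ - deriv f₂ ξ) - 1/2 * (f₁ ξ - f₂ ξ))
    (hr₁ : ∀ ξ : ℝ, e ξ + deriv f₁ ξ ∈ Set.Ioo (-(1 / Real.sqrt 3)) (1 / Real.sqrt 3))
    (hr₂ : ∀ ξ : ℝ, e ξ + deriv f₂ ξ ∈ Set.Ioo (-(1 / Real.sqrt 3)) (1 / Real.sqrt 3)) :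
    ∫ ξ : ℝ, 2 * ((f₁ ξ - f₂ ξ) * (df₁ ξ - df₂ ξ))
      ≤ -(3/2) * ∫ ξ : ℝ, (f₁ ξ - f₂ ξ) ^ 2 := by
  -- Schwartz packaging
  set Fφ : SchwartzMap ℝ ℝ := f₁ - f₂ with hFφ
  set Fp : SchwartzMap ℝ ℝ := SchwartzMap.derivCLM ℝ ℝ f₁ - SchwartzMap.derivCLM ℝ ℝ f₂ with hFp
  set Fd : SchwartzMap ℝ ℝ := df₁ - df₂ with hFd
  have hφapp : ∀ ξ, Fφ ξ = f₁ ξ - f₂ ξ := fun ξ => rfl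
  have hpapp : ∀ ξ, Fp ξ = deriv f₁ ξ - deriv f₂ ξ := fun ξ => by
    simp [hFp, SchwartzMap.sub_apply, SchwartzMap.derivCLM_apply]
  have hdapp : ∀ ξ, Fd ξ = df₁ ξ - df₂ ξ := fun ξ => rfl
  -- derivative of Fφ
  have hφ' : ∀ ξ, HasDerivAt Fφ (Fp ξ) ξ := by
    intro ξ
    have h := (f₁.differentiableAt (x := ξ)).hasDerivAt.sub
      (f₂.differentiableAt (x := ξ)).hasDerivAt
    rw [hpapp]
    exact h.congr_deriv rfl |>.congr_of_eventuallyEq (Filter.Eventually.of_forall fun x => rfl)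
  -- local wave vectors
  set u₁ : ℝ → ℝ := fun x => e x + deriv f₁ x with hu₁def
  set u₂ : ℝ → ℝ := fun x => e x + deriv f₂ x with hu₂def
  have hsq₁ : ∀ ξ, (u₁ ξ) ^ 2 ≤ 1/3 := fun ξ => (sq_lt_third (hr₁ ξ)).le
  have hsq₂ : ∀ ξ, (u₂ ξ) ^ 2 ≤ 1/3 := fun ξ => (sq_lt_third (hr₂ ξ)).le
  -- derivatives of the flux terms
  have hderiv_coe : ∀ f : SchwartzMap ℝ ℝ, Differentiable ℝ (deriv (⇑f)) := by
    intro f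
    have hcoe : ⇑(SchwartzMap.derivCLM ℝ ℝ f) = deriv (⇑f) :=
      funext fun x => SchwartzMap.derivCLM_apply ℝ f x
    rw [← hcoe]; exact (SchwartzMap.derivCLM ℝ ℝ f).differentiable
  have hu₁' : ∀ ξ, HasDerivAt u₁ (deriv e ξ + deriv (deriv (⇑f₁)) ξ) ξ := fun ξ =>
    (((heC2.differentiable (by norm_num)) ξ).hasDerivAt).add
      ((hderiv_coe f₁ ξ).hasDerivAt)
  have hu₂' : ∀ ξ, HasDerivAt u₂ (deriv e ξ + deriv (deriv (⇑f₂)) ξ) ξ := fun ξ =>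
    (((heC2.differentiable (by norm_num)) ξ).hasDerivAt).add
      ((hderiv_coe f₂ ξ).hasDerivAt)
  set h₁ : ℝ → ℝ := fun x => AGL (u₁ x) with hh₁def
  set h₂ : ℝ → ℝ := fun x => AGL (u₂ x) with hh₂def
  have hd₁ : ∀ ξ, DifferentiableAt ℝ h₁ ξ := fun ξ =>
    ((hasDerivAt_AGL (hsq₁ ξ)).comp ξ (hu₁' ξ)).differentiableAt
  have hd₂ : ∀ ξ, DifferentiableAt ℝ h₂ ξ := fun ξ =>
    ((hasDerivAt_AGL (hsq₂ ξ)).comp ξ (hu₂' ξ)).differentiableAt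
  set g : ℝ → ℝ := fun ξ => deriv h₁ ξ - deriv h₂ ξ with hgdef
  set h : ℝ → ℝ := fun x => h₁ x - h₂ x with hhdef
  have hg : ∀ ξ, HasDerivAt h (g ξ) ξ := fun ξ =>
    ((hd₁ ξ).hasDerivAt).sub ((hd₂ ξ).hasDerivAt)
  have hcont_h : Continuous h := by
    apply Continuous.sub
    · exact continuous_iff_continuousAt.2 fun ξ => (hd₁ ξ).continuousAt
    · exact continuous_iff_continuousAt.2 fun ξ => (hd₂ ξ).continuousAt
  -- the equation for the difference
  have heq' : ∀ ξ, Fd ξ = g ξ + ξ / 2 * Fp ξ - 1/2 * Fφ ξ := by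
    intro ξ
    rw [hdapp, hpapp, hφapp, heq ξ]
  have hgval : ∀ ξ, g ξ = Fd ξ - ξ / 2 * Fp ξ + 1/2 * Fφ ξ := fun ξ => by
    have := heq' ξ; linarith
  -- bound |h| ≤ 3/2 |Fp|
  have hhb : ∀ ξ, |h ξ| ≤ 3/2 * |Fp ξ| := by
    intro ξ
    have := AGL_lipschitz (hsq₁ ξ) (hsq₂ ξ)
    have hsub : u₁ ξ - u₂ ξ = Fp ξ := by by_contra hco; apply hco; rw [hpapp]; simp only [hu₁def, hu₂def]; ring
    simpa [hhdef, hh₁def, hh₂def, hsub] using this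
  -- integrability
  have I1 : Integrable (fun ξ : ℝ => Fφ ξ * Fd ξ) volume := schwartz_mul_integrable _ _
  have I2 : Integrable (fun ξ : ℝ => ξ * (Fφ ξ * Fp ξ)) volume := schwartz_xmul_integrable _ _
  have I3 : Integrable (fun ξ : ℝ => (Fφ ξ) ^ 2) volume := by
    simpa [sq] using schwartz_mul_integrable Fφ Fφ
  have I4 : Integrable (fun ξ : ℝ => Fφ ξ * g ξ) volume := by
    have hfe : (fun ξ : ℝ => Fφ ξ * g ξ)
        = fun ξ => Fφ ξ * Fd ξ - (1/2) * (ξ * (Fφ ξ * Fp ξ)) + (1/2) * (Fφ ξ) ^ 2 := by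
      funext ξ; rw [hgval ξ]; ring
    rw [hfe]
    exact (I1.sub (I2.const_mul _)).add (I3.const_mul _)
  have I5 : Integrable (fun ξ : ℝ => Fp ξ * h ξ) volume := by
    refine ((schwartz_mul_integrable Fp Fp).abs.const_mul (3/2)).mono'
      ((Fp.continuous.mul hcont_h).aestronglyMeasurable) ?_
    refine Filter.Eventually.of_forall fun ξ => ?_
    rw [Real.norm_eq_abs, abs_mul]
    calc |Fp ξ| * |h ξ| ≤ |Fp ξ| * (3/2 * |Fp ξ|) :=
          mul_le_mul_of_nonneg_left (hhb ξ) (abs_nonneg _)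
      _ = 3/2 * |Fp ξ * Fp ξ| := by rw [abs_mul]; ring
  have I6 : Integrable (fun ξ : ℝ => Fφ ξ * h ξ) volume := by
    refine ((schwartz_mul_integrable Fφ Fp).abs.const_mul (3/2)).mono'
      ((Fφ.continuous.mul hcont_h).aestronglyMeasurable) ?_
    refine Filter.Eventually.of_forall fun ξ => ?_
    rw [Real.norm_eq_abs, abs_mul]
    calc |Fφ ξ| * |h ξ| ≤ |Fφ ξ| * (3/2 * |Fp ξ|) :=
          mul_le_mul_of_nonneg_left (hhb ξ) (abs_nonneg _)
      _ = 3/2 * |Fφ ξ * Fp ξ| := by rw [abs_mul]; ring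
  have I7 : Integrable (fun ξ : ℝ => ξ * (Fφ ξ) ^ 2) volume := by
    have := schwartz_xmul_integrable Fφ Fφ
    simpa [sq] using this
  -- integration by parts 1
  have P1 : ∫ ξ : ℝ, Fφ ξ * g ξ = - ∫ ξ : ℝ, Fp ξ * h ξ := by
    exact integral_mul_deriv_eq_deriv_mul_of_integrable (fun x _ => hφ' x) (fun x _ => hg x) I4 I5 I6
  have hPnn : 0 ≤ ∫ ξ : ℝ, Fp ξ * h ξ := by
    apply integral_nonneg
    intro ξ
    have := AGL_mono_prod (hsq₁ ξ) (hsq₂ ξ)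
    have hsub : u₁ ξ - u₂ ξ = Fp ξ := by by_contra hco; apply hco; rw [hpapp]; simp only [hu₁def, hu₂def]; ring
    have hh : h ξ = AGL (u₁ ξ) - AGL (u₂ ξ) := rfl
    calc (0:ℝ) ≤ (AGL (u₁ ξ) - AGL (u₂ ξ)) * (u₁ ξ - u₂ ξ) := this
      _ = Fp ξ * h ξ := by rw [hsub, hh]; ring
  have hP1le : ∫ ξ : ℝ, Fφ ξ * g ξ ≤ 0 := by rw [P1]; linarith
  -- integration by parts 2
  have hsqder : ∀ ξ : ℝ, HasDerivAt (fun x => (Fφ x) ^ 2) (2 * Fφ ξ * Fp ξ) ξ := by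
    intro ξ
    have := (hφ' ξ).fun_pow 2
    simpa using this
  have P2 : ∫ ξ : ℝ, ξ * (2 * Fφ ξ * Fp ξ) = - ∫ ξ : ℝ, 1 * (Fφ ξ) ^ 2 := by
    refine integral_mul_deriv_eq_deriv_mul_of_integrable (fun x _ => hasDerivAt_id x) (fun x _ => hsqder x) ?_ ?_ ?_
    · have hfe : (fun ξ : ℝ => id ξ * (2 * Fφ ξ * Fp ξ)) = fun ξ => 2 * (ξ * (Fφ ξ * Fp ξ)) := by
        funext ξ; simp [id]; ring
      show Integrable (fun ξ : ℝ => id ξ * (2 * Fφ ξ * Fp ξ)) volume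
      rw [hfe]; exact I2.const_mul 2
    · show Integrable (fun ξ : ℝ => 1 * (Fφ ξ) ^ 2) volume
      simpa using I3
    · show Integrable (fun ξ : ℝ => id ξ * (Fφ ξ) ^ 2) volume
      simpa [id] using I7
  have P2' : ∫ ξ : ℝ, ξ * (Fφ ξ * Fp ξ) = -(1/2) * ∫ ξ : ℝ, (Fφ ξ) ^ 2 := by
    have h2 : ∫ ξ : ℝ, ξ * (2 * Fφ ξ * Fp ξ) = 2 * ∫ ξ : ℝ, ξ * (Fφ ξ * Fp ξ) := by
      rw [← integral_const_mul]
      congr 1; funext ξ; ring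
    have h3 : ∫ ξ : ℝ, 1 * (Fφ ξ) ^ 2 = ∫ ξ : ℝ, (Fφ ξ) ^ 2 := by
      congr 1; funext ξ; ring
    rw [h2, h3] at P2
    linarith
  -- assemble
  have hsplit : ∫ ξ : ℝ, 2 * (Fφ ξ * Fd ξ)
      = 2 * (∫ ξ : ℝ, Fφ ξ * g ξ) + (∫ ξ : ℝ, ξ * (Fφ ξ * Fp ξ)) - ∫ ξ : ℝ, (Fφ ξ) ^ 2 := by
    have hfe : (fun ξ : ℝ => 2 * (Fφ ξ * Fd ξ))
        = fun ξ => (2 * (Fφ ξ * g ξ) + ξ * (Fφ ξ * Fp ξ)) - (Fφ ξ) ^ 2 := by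
      funext ξ; rw [heq' ξ]; ring
    have I4' : Integrable (fun ξ : ℝ => 2 * (Fφ ξ * g ξ)) volume := I4.const_mul 2
    have Iadd : Integrable (fun ξ : ℝ => 2 * (Fφ ξ * g ξ) + ξ * (Fφ ξ * Fp ξ)) volume :=
      I4'.add I2
    rw [hfe, integral_sub Iadd I3, integral_add I4' I2, integral_const_mul]
  have hfinal : ∫ ξ : ℝ, 2 * (Fφ ξ * Fd ξ) ≤ -(3/2) * ∫ ξ : ℝ, (Fφ ξ) ^ 2 := by
    rw [hsplit, P2']
    nlinarith [hP1le]
  have hco1 : (fun ξ : ℝ => 2 * ((f₁ ξ - f₂ ξ) * (df₁ ξ - df₂ ξ)))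
      = fun ξ : ℝ => 2 * (Fφ ξ * Fd ξ) := by
    funext ξ; rw [hφapp, hdapp]
  have hco2 : (fun ξ : ℝ => (f₁ ξ - f₂ ξ) ^ 2) = fun ξ : ℝ => (Fφ ξ) ^ 2 := by
    funext ξ; rw [hφapp]
  rw [hco1, hco2]
  exact hfinal

end PDHelp

open PDHelp in
/-- Contraction for the rescaled phase diffusion equation: any two Schwartz-class
solutions of `∂τψ = ∂ξ[A(η̃+∂ξψ)] + (ξ/2)(η̃+∂ξψ) - (1/2)(Ñ+ψ)` whose local
wave-vector stays in `(-1/√3, 1/√3)` approach each other in `L²` at rate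
`e^{-3τ/4}`. -/
theorem phase_diffusion_contraction
    (ηp ηm : ℝ)
    (hp : ηp ∈ Set.Ioo (-(1 / Real.sqrt 3)) (1 / Real.sqrt 3))
    (hm : ηm ∈ Set.Ioo (-(1 / Real.sqrt 3)) (1 / Real.sqrt 3))
    (e : ℝ → ℝ) (he : IsMixingProfile ηp ηm e)
    (Ψ₁ Ψ₂ dΨ₁ dΨ₂ : ℝ → SchwartzMap ℝ ℝ)
    (hcont₁ : ContinuousOn Ψ₁ (Set.Ici 0)) (hcont₂ : ContinuousOn Ψ₂ (Set.Ici 0))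
    (hdcont₁ : ContinuousOn dΨ₁ (Set.Ici 0)) (hdcont₂ : ContinuousOn dΨ₂ (Set.Ici 0))
    (hderiv₁ : ∀ τ ∈ Set.Ici (0:ℝ), ∀ ξ : ℝ,
      HasDerivWithinAt (fun t => Ψ₁ t ξ) (dΨ₁ τ ξ) (Set.Ici 0) τ)
    (hderiv₂ : ∀ τ ∈ Set.Ici (0:ℝ), ∀ ξ : ℝ,
      HasDerivWithinAt (fun t => Ψ₂ t ξ) (dΨ₂ τ ξ) (Set.Ici 0) τ)
    (heq₁ : ∀ τ ∈ Set.Ici (0:ℝ), ∀ ξ : ℝ,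
      dΨ₁ τ ξ = deriv (fun x => AGL (e x + deriv (Ψ₁ τ) x)) ξ
        + ξ / 2 * (e ξ + deriv (Ψ₁ τ) ξ) - (1/2) * (NGL e ηm ξ + Ψ₁ τ ξ))
    (heq₂ : ∀ τ ∈ Set.Ici (0:ℝ), ∀ ξ : ℝ,
      dΨ₂ τ ξ = deriv (fun x => AGL (e x + deriv (Ψ₂ τ) x)) ξ
        + ξ / 2 * (e ξ + deriv (Ψ₂ τ) ξ) - (1/2) * (NGL e ηm ξ + Ψ₂ τ ξ))
    (hrange₁ : ∀ τ ∈ Set.Ici (0:ℝ), ∀ ξ : ℝ,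
      e ξ + deriv (Ψ₁ τ) ξ ∈ Set.Ioo (-(1 / Real.sqrt 3)) (1 / Real.sqrt 3))
    (hrange₂ : ∀ τ ∈ Set.Ici (0:ℝ), ∀ ξ : ℝ,
      e ξ + deriv (Ψ₂ τ) ξ ∈ Set.Ioo (-(1 / Real.sqrt 3)) (1 / Real.sqrt 3)) :
    ∀ τ ∈ Set.Ici (0:ℝ),
      Real.sqrt (∫ ξ : ℝ, (Ψ₁ τ ξ - Ψ₂ τ ξ) ^ 2)
        ≤ Real.exp (-(3 * τ) / 4) * Real.sqrt (∫ ξ : ℝ, (Ψ₁ 0 ξ - Ψ₂ 0 ξ) ^ 2) := by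
  intro τ hτ
  set G : ℝ → ℝ := fun t => ∫ ξ : ℝ, (Ψ₁ t ξ - Ψ₂ t ξ) ^ 2 with hGdef
  set D : ℝ → ℝ := fun t => ∫ ξ : ℝ, 2 * ((Ψ₁ t ξ - Ψ₂ t ξ) * (dΨ₁ t ξ - dΨ₂ t ξ)) with hDdef
  -- nonnegativity
  have hGnn : ∀ t, 0 ≤ G t := fun t => integral_nonneg fun ξ => sq_nonneg _
  -- integrability of the square
  have hIsq : ∀ t : ℝ, Integrable (fun ξ : ℝ => (Ψ₁ t ξ - Ψ₂ t ξ) ^ 2) volume := by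
    intro t
    have := schwartz_mul_integrable (Ψ₁ t - Ψ₂ t) (Ψ₁ t - Ψ₂ t)
    simp only [SchwartzMap.sub_apply] at this
    simpa [sq] using this
  -- dissipativity estimate
  have hGle : ∀ t ∈ Set.Ici (0:ℝ), D t ≤ -(3/2) * G t := by
    intro t ht
    apply key_estimate e he.1 (Ψ₁ t) (Ψ₂ t) (dΨ₁ t) (dΨ₂ t) ?_ (hrange₁ t ht) (hrange₂ t ht)
    intro ξ
    have h1 := heq₁ t ht ξ
    have h2 := heq₂ t ht ξ
    rw [h1, h2]; ring
  -- derivative of G at interior points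
  have hGd : ∀ t ∈ Set.Ioi (0:ℝ), HasDerivAt G (D t) t := by
    intro t₀ ht₀
    have ht₀' : (0:ℝ) < t₀ := ht₀
    have hKsub : Set.Icc (t₀/2) (3*t₀/2) ⊆ Set.Ici (0:ℝ) := by
      intro x hx; have := hx.1; simp only [Set.mem_Ici]; linarith
    have hφc : ContinuousOn (fun t => Ψ₁ t - Ψ₂ t) (Set.Icc (t₀/2) (3*t₀/2)) :=
      (hcont₁.mono hKsub).sub (hcont₂.mono hKsub)
    have hdc : ContinuousOn (fun t => dΨ₁ t - dΨ₂ t) (Set.Icc (t₀/2) (3*t₀/2)) :=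
      (hdcont₁.mono hKsub).sub (hdcont₂.mono hKsub)
    obtain ⟨C₁, hC₁0, hC₁⟩ := fam_decay_bound isCompact_Icc hφc
    obtain ⟨C₂, hC₂0, hC₂⟩ := fam_decay_bound isCompact_Icc hdc
    have hball : Metric.ball t₀ (t₀/2) ⊆ Set.Icc (t₀/2) (3*t₀/2) := by
      intro x hx
      rw [Real.ball_eq_Ioo] at hx
      constructor <;> [linarith [hx.1]; linarith [hx.2]]
    have main := hasDerivAt_integral_of_dominated_loc_of_deriv_le (μ := volume)
      (F := fun t ξ => (Ψ₁ t ξ - Ψ₂ t ξ) ^ 2)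
      (F' := fun t ξ => 2 * ((Ψ₁ t ξ - Ψ₂ t ξ) * (dΨ₁ t ξ - dΨ₂ t ξ)))
      (x₀ := t₀) (bound := fun ξ => 2 * C₁ * C₂ * (1 + ξ ^ 2)⁻¹)
      (Metric.ball_mem_nhds t₀ (half_pos ht₀')) ?_ (hIsq t₀) ?_ ?_ ?_ ?_
    · exact main.2
    · exact Filter.Eventually.of_forall fun t =>
        (((Ψ₁ t).continuous.sub (Ψ₂ t).continuous).pow 2).aestronglyMeasurable
    · exact (continuous_const.mul (((Ψ₁ t₀).continuous.sub (Ψ₂ t₀).continuous).mul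
        ((dΨ₁ t₀).continuous.sub (dΨ₂ t₀).continuous))).aestronglyMeasurable
    · refine Filter.Eventually.of_forall fun ξ => fun t ht => ?_
      have htK := hball ht
      have hb₁ := hC₁ t htK ξ
      have hb₂ := hC₂ t htK ξ
      simp only [SchwartzMap.sub_apply] at hb₁ hb₂
      have hpos : (0:ℝ) < 1 + ξ ^ 2 := by positivity
      have h1 : |Ψ₁ t ξ - Ψ₂ t ξ| ≤ C₁ * (1 + ξ ^ 2)⁻¹ := by
        rw [mul_comm, ← le_div_iff₀ hpos] at hb₁
        simpa [div_eq_mul_inv] using hb₁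
      have h2 : |dΨ₁ t ξ - dΨ₂ t ξ| ≤ C₂ := by
        nlinarith [abs_nonneg (dΨ₁ t ξ - dΨ₂ t ξ), sq_nonneg ξ]
      rw [Real.norm_eq_abs, abs_mul, abs_mul, abs_two]
      calc (2:ℝ) * (|Ψ₁ t ξ - Ψ₂ t ξ| * |dΨ₁ t ξ - dΨ₂ t ξ|)
          ≤ 2 * ((C₁ * (1 + ξ ^ 2)⁻¹) * C₂) := by
            apply mul_le_mul_of_nonneg_left _ (by norm_num)
            exact mul_le_mul h1 h2 (abs_nonneg _) (by positivity)
        _ = 2 * C₁ * C₂ * (1 + ξ ^ 2)⁻¹ := by ring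
    · exact (integrable_inv_one_add_sq.const_mul (2 * C₁ * C₂)).congr
        (Filter.Eventually.of_forall fun ξ => by ring)
    · refine Filter.Eventually.of_forall fun ξ => fun t ht => ?_
      have htpos : (0:ℝ) < t := lt_of_lt_of_le (half_pos ht₀') (hball ht).1
      have hIci : Set.Ici (0:ℝ) ∈ nhds t := Ici_mem_nhds htpos
      have h1 := (hderiv₁ t htpos.le ξ).hasDerivAt hIci
      have h2 := (hderiv₂ t htpos.le ξ).hasDerivAt hIci
      have h3 := (h1.fun_sub h2).fun_pow 2
      exact h3.congr_deriv (by rw [Nat.cast_ofNat, show (2:ℕ) - 1 = 1 from rfl, pow_one]; ring)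
  -- continuity of G on [0, ∞)
  have hGcont : ContinuousOn G (Set.Ici 0) := by
    intro t₀ ht₀
    have hKc : IsCompact (Set.Icc (t₀ - 1) (t₀ + 1) ∩ Set.Ici 0) :=
      isCompact_Icc.inter_right isClosed_Ici
    obtain ⟨C, hC0, hC⟩ := fam_decay_bound hKc
      ((hcont₁.mono Set.inter_subset_right).sub (hcont₂.mono Set.inter_subset_right))
    apply continuousWithinAt_of_dominated (bound := fun ξ => C ^ 2 * (1 + ξ ^ 2)⁻¹)
    · exact Filter.Eventually.of_forall fun t =>
        (((Ψ₁ t).continuous.sub (Ψ₂ t).continuous).pow 2).aestronglyMeasurable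
    · have hev : ∀ᶠ t in nhdsWithin t₀ (Set.Ici 0),
          t ∈ Set.Icc (t₀ - 1) (t₀ + 1) ∩ Set.Ici 0 := by
        apply Filter.eventually_inf_principal.2
        filter_upwards [Icc_mem_nhds (by linarith : t₀ - 1 < t₀) (by linarith : t₀ < t₀ + 1)] with t ht ht0
        exact ⟨ht, ht0⟩
      filter_upwards [hev] with t htK
      refine Filter.Eventually.of_forall fun ξ => ?_
      have hb : (1 + ξ ^ 2) * |Ψ₁ t ξ - Ψ₂ t ξ| ≤ C := hC t htK ξ
      have hpos : (0:ℝ) < 1 + ξ ^ 2 := by positivity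
      have h1 : |Ψ₁ t ξ - Ψ₂ t ξ| ≤ C * (1 + ξ ^ 2)⁻¹ := by
        rw [mul_comm, ← le_div_iff₀ hpos] at hb
        simpa [div_eq_mul_inv] using hb
      have hinv1 : (1 + ξ ^ 2)⁻¹ ≤ 1 := by
        calc (1 + ξ ^ 2)⁻¹ ≤ (1:ℝ)⁻¹ := by gcongr; nlinarith
          _ = 1 := inv_one
      rw [Real.norm_eq_abs, abs_pow]
      calc |Ψ₁ t ξ - Ψ₂ t ξ| ^ 2 ≤ (C * (1 + ξ ^ 2)⁻¹) ^ 2 :=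
            pow_le_pow_left₀ (abs_nonneg _) h1 2
        _ = C ^ 2 * (1 + ξ ^ 2)⁻¹ * (1 + ξ ^ 2)⁻¹ := by ring
        _ ≤ C ^ 2 * (1 + ξ ^ 2)⁻¹ * 1 := by
            apply mul_le_mul_of_nonneg_left hinv1 (by positivity)
        _ = C ^ 2 * (1 + ξ ^ 2)⁻¹ := by ring
    · exact integrable_inv_one_add_sq.const_mul _
    · refine Filter.Eventually.of_forall fun ξ => ?_
      have c1 : ContinuousWithinAt (fun t => Ψ₁ t ξ) (Set.Ici 0) t₀ :=
        (eval_continuous ξ).continuousAt.comp_continuousWithinAt (hcont₁ t₀ ht₀)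
      have c2 : ContinuousWithinAt (fun t => Ψ₂ t ξ) (Set.Ici 0) t₀ :=
        (eval_continuous ξ).continuousAt.comp_continuousWithinAt (hcont₂ t₀ ht₀)
      exact (c1.sub c2).pow 2
  -- Gronwall via antitonicity
  have hmono : AntitoneOn (fun t => Real.exp (3/2 * t) * G t) (Set.Ici 0) := by
    apply antitoneOn_of_deriv_nonpos (convex_Ici 0)
    · exact ((Real.continuous_exp.comp (continuous_const.mul continuous_id)).continuousOn).mul
        hGcont
    · rw [interior_Ici]
      intro t ht
      have hexp : HasDerivAt (fun t : ℝ => Real.exp (3/2 * t)) (Real.exp (3/2 * t) * (3/2)) t := by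
        simpa using ((hasDerivAt_id t).const_mul (3/2 : ℝ)).exp
      exact ((hexp.mul (hGd t ht)).differentiableAt).differentiableWithinAt
    · rw [interior_Ici]
      intro t ht
      have hexp : HasDerivAt (fun t : ℝ => Real.exp (3/2 * t)) (Real.exp (3/2 * t) * (3/2)) t := by
        simpa using ((hasDerivAt_id t).const_mul (3/2 : ℝ)).exp
      have hH := hexp.mul (hGd t ht)
      rw [show (fun t => Real.exp (3/2 * t) * G t) = ((fun t => Real.exp (3/2 * t)) * G) from rfl, hH.deriv]
      have hle := hGle t (Set.mem_Ici.2 (le_of_lt (Set.mem_Ioi.1 ht)))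
      have h1 : Real.exp (3/2 * t) * D t ≤ Real.exp (3/2 * t) * (-(3/2) * G t) :=
        mul_le_mul_of_nonneg_left hle (Real.exp_nonneg _)
      nlinarith [Real.exp_pos (3/2 * t)]
  -- conclude
  have hτ0 : (0:ℝ) ≤ τ := hτ
  have hHle : Real.exp (3/2 * τ) * G τ ≤ Real.exp (3/2 * 0) * G 0 :=
    hmono (Set.self_mem_Ici) hτ hτ0
  rw [mul_zero, Real.exp_zero, one_mul] at hHle
  have hGτ : G τ ≤ Real.exp (-(3 * τ) / 2) * G 0 := by
    have h2 : Real.exp (-(3 * τ) / 2) * Real.exp (3/2 * τ) = 1 := by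
      have hz : (-(3 * τ) / 2 + 3/2 * τ) = 0 := by ring
      rw [← Real.exp_add, hz, Real.exp_zero]
    have h3 := mul_le_mul_of_nonneg_left hHle (Real.exp_nonneg (-(3 * τ) / 2))
    calc G τ = (Real.exp (-(3 * τ) / 2) * Real.exp (3/2 * τ)) * G τ := by rw [h2, one_mul]
      _ = Real.exp (-(3 * τ) / 2) * (Real.exp (3/2 * τ) * G τ) := by ring
      _ ≤ Real.exp (-(3 * τ) / 2) * G 0 := h3
  calc Real.sqrt (G τ) ≤ Real.sqrt (Real.exp (-(3 * τ) / 2) * G 0) := Real.sqrt_le_sqrt hGτ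
    _ = Real.sqrt (Real.exp (-(3 * τ) / 2)) * Real.sqrt (G 0) :=
        Real.sqrt_mul (Real.exp_nonneg _) _
    _ = Real.exp (-(3 * τ) / 4) * Real.sqrt (G 0) := by
        rw [← Real.exp_half]
        congr 1; ring
end
end
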